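/- arXiv:1811.03996 — 2 statements merged into one kernel-verified Lean document; each statement's English description precedes it below -/
import Mathlib

section
/- Let A, B ∈ ℂ^{m×m} be unitary, P, Q ⊆ {1,…,m}, and ε_P, ε_Q ∈ [0,1]. If there exist nonzero p, q ∈ ℂ^m with A p = B q, ‖p − D_P p‖₂ ≤ ε_P ‖p‖₂, and ‖q − D_Q q‖₂ ≤ ε_Q ‖q‖₂, then |P|·|Q| ≥ max(1 − ε_P − ε_Q, 0)² / μ², where μ = max_{i,j} |(A* B)_{i,j}|. -/
open scoped BigOperators Matrix

noncomputable def vnorm2 {m : ℕ} (x : Fin m → ℂ) : ℝ :=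
  Real.sqrt (∑ i, ‖x i‖ ^ 2)

noncomputable def vnorm1 {m : ℕ} (x : Fin m → ℂ) : ℝ :=
  ∑ i, ‖x i‖

noncomputable def opnorm2 {m n : ℕ} (A : Matrix (Fin m) (Fin n) ℂ) : ℝ :=
  sSup {c | ∃ x : Fin n → ℂ, vnorm2 x = 1 ∧ c = vnorm2 (A.mulVec x)}

noncomputable def opnorm1 {m n : ℕ} (A : Matrix (Fin m) (Fin n) ℂ) : ℝ :=
  sSup {c | ∃ x : Fin n → ℂ, vnorm1 x = 1 ∧ c = vnorm1 (A.mulVec x)}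

noncomputable def frobNorm {m n : ℕ} (A : Matrix (Fin m) (Fin n) ℂ) : ℝ :=
  Real.sqrt (∑ i, ∑ j, ‖A i j‖ ^ 2)

def Dmat {m : ℕ} (P : Finset (Fin m)) : Matrix (Fin m) (Fin m) ℂ :=
  Matrix.diagonal (fun i => if i ∈ P then 1 else 0)

noncomputable def dft (m : ℕ) : Matrix (Fin m) (Fin m) ℂ :=
  fun k l => (1 / Real.sqrt m : ℝ) *
    Complex.exp (-2 * Real.pi * Complex.I * (k.1 + 1) * (l.1 + 1) / m)

lemma vnorm2_nonneg {m : ℕ} (x : Fin m → ℂ) : 0 ≤ vnorm2 x := Real.sqrt_nonneg _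

lemma vnorm2_sq {m : ℕ} (x : Fin m → ℂ) : vnorm2 x ^ 2 = ∑ i, ‖x i‖ ^ 2 :=
  Real.sq_sqrt (Finset.sum_nonneg fun _ _ => sq_nonneg _)

lemma vnorm2_eq_zero {m : ℕ} {x : Fin m → ℂ} (h : vnorm2 x = 0) : x = 0 := by
  have h2 : ∑ i, ‖x i‖ ^ 2 = 0 := by
    have := vnorm2_sq x; rw [h] at this; simpa using this.symm
  funext i
  have := (Finset.sum_eq_zero_iff_of_nonneg (fun i _ => sq_nonneg (‖x i‖))).1 h2 i (Finset.mem_univ i)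
  simpa [pow_eq_zero_iff] using this

lemma dot_self {m : ℕ} (x : Fin m → ℂ) :
    dotProduct (star x) x = ((vnorm2 x ^ 2 : ℝ) : ℂ) := by
  rw [vnorm2_sq]
  push_cast
  unfold dotProduct
  refine Finset.sum_congr rfl fun i _ => ?_
  rw [Pi.star_apply, Complex.star_def, mul_comm, Complex.mul_conj,
    ← Complex.ofReal_pow, Complex.sq_norm]

lemma unitary_mulVec_norm {m : ℕ} {U : Matrix (Fin m) (Fin m) ℂ}
    (hU : U ∈ Matrix.unitaryGroup (Fin m) ℂ) (x : Fin m → ℂ) :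
    vnorm2 (U.mulVec x) = vnorm2 x := by
  have h1 : star U * U = 1 := hU.1
  have key : dotProduct (star (U.mulVec x)) (U.mulVec x)
      = dotProduct (star x) x := by
    rw [Matrix.star_mulVec, Matrix.dotProduct_mulVec, Matrix.vecMul_vecMul]
    rw [Matrix.star_eq_conjTranspose] at h1
    rw [h1, Matrix.vecMul_one]
  rw [dot_self, dot_self] at key
  have := Complex.ofReal_inj.1 key
  nlinarith [vnorm2_nonneg (U.mulVec x), vnorm2_nonneg x]

lemma abs_dot_le {m : ℕ} (u v : Fin m → ℂ) :
    ‖dotProduct (star u) v‖ ≤ vnorm2 u * vnorm2 v := by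
  have h1 : ‖dotProduct (star u) v‖
      ≤ ∑ i, ‖u i‖ * ‖v i‖ := by
    refine (norm_sum_le _ _).trans (le_of_eq ?_)
    refine Finset.sum_congr rfl fun i _ => ?_
    simp [Pi.star_apply, map_mul]
  refine h1.trans ?_
  have h2 := Finset.sum_mul_sq_le_sq_mul_sq Finset.univ
    (fun i => ‖u i‖) (fun i => ‖v i‖)
  have h3 : (∑ i, ‖u i‖ * ‖v i‖) ^ 2
      ≤ (vnorm2 u * vnorm2 v) ^ 2 := by
    rw [mul_pow, vnorm2_sq, vnorm2_sq]; exact h2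
  have h4 : 0 ≤ ∑ i, ‖u i‖ * ‖v i‖ :=
    Finset.sum_nonneg fun i _ => mul_nonneg (norm_nonneg _) (norm_nonneg _)
  nlinarith [mul_nonneg (vnorm2_nonneg u) (vnorm2_nonneg v)]

lemma l1_le_sqrt_card {m : ℕ} (P : Finset (Fin m)) (x : Fin m → ℂ) :
    ∑ i ∈ P, ‖x i‖ ≤ Real.sqrt P.card * vnorm2 x := by
  have h2 := Finset.sum_mul_sq_le_sq_mul_sq P (fun _ => (1:ℝ)) (fun i => ‖x i‖)
  simp only [one_mul, one_pow] at h2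
  have hsub : (∑ i ∈ P, ‖x i‖ ^ 2) ≤ ∑ i, ‖x i‖ ^ 2 :=
    Finset.sum_le_sum_of_subset_of_nonneg (Finset.subset_univ P) (fun i _ _ => sq_nonneg _)
  have h3 : (∑ i ∈ P, ‖x i‖) ^ 2 ≤ (Real.sqrt P.card * vnorm2 x) ^ 2 := by
    rw [mul_pow, vnorm2_sq, Real.sq_sqrt (Nat.cast_nonneg _)]
    calc (∑ i ∈ P, ‖x i‖) ^ 2 ≤ P.card * ∑ i ∈ P, ‖x i‖ ^ 2 := by
          simpa using h2
      _ ≤ P.card * ∑ i, ‖x i‖ ^ 2 :=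
          mul_le_mul_of_nonneg_left hsub (Nat.cast_nonneg _)
  have h4 : 0 ≤ ∑ i ∈ P, ‖x i‖ := Finset.sum_nonneg fun i _ => norm_nonneg _
  nlinarith [mul_nonneg (Real.sqrt_nonneg (P.card:ℝ)) (vnorm2_nonneg x)]

lemma Dmat_mulVec {m : ℕ} (P : Finset (Fin m)) (x : Fin m → ℂ) (i : Fin m) :
    (Dmat P).mulVec x i = if i ∈ P then x i else 0 := by
  rw [Dmat, Matrix.mulVec_diagonal]
  by_cases h : i ∈ P <;> simp [h]

lemma vnorm2_Dmat_le {m : ℕ} (P : Finset (Fin m)) (x : Fin m → ℂ) :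
    vnorm2 ((Dmat P).mulVec x) ≤ vnorm2 x := by
  apply Real.sqrt_le_sqrt
  refine Finset.sum_le_sum fun i _ => ?_
  rw [Dmat_mulVec]
  by_cases h : i ∈ P <;> simp [h, sq_nonneg]

lemma sum_abs_Dmat {m : ℕ} (P : Finset (Fin m)) (x : Fin m → ℂ) :
    ∑ i, ‖(Dmat P).mulVec x i‖ = ∑ i ∈ P, ‖x i‖ := by
  have h1 : (∑ i, ‖(Dmat P).mulVec x i‖)
      = ∑ i, if i ∈ P then ‖x i‖ else 0 := by
    refine Finset.sum_congr rfl fun i _ => ?_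
    rw [Dmat_mulVec]; split <;> simp
  rw [h1, Finset.sum_ite_mem, Finset.univ_inter]

theorem stmt8 {m : ℕ} (A B : Matrix (Fin m) (Fin m) ℂ)
    (hA : A ∈ Matrix.unitaryGroup (Fin m) ℂ) (hB : B ∈ Matrix.unitaryGroup (Fin m) ℂ)
    (P Q : Finset (Fin m))
    (εP εQ : ℝ) (hεP : εP ∈ Set.Icc (0 : ℝ) 1) (hεQ : εQ ∈ Set.Icc (0 : ℝ) 1)
    (μ : ℝ) (hμ : IsGreatest {x | ∃ i j, x = ‖(Aᴴ * B) i j‖} μ)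
    (p q : Fin m → ℂ) (hp0 : p ≠ 0) (hq0 : q ≠ 0) (hpq : A.mulVec p = B.mulVec q)
    (hpc : vnorm2 (p - (Dmat P).mulVec p) ≤ εP * vnorm2 p)
    (hqc : vnorm2 (q - (Dmat Q).mulVec q) ≤ εQ * vnorm2 q) :
    ((P.card : ℝ) * Q.card) ≥ (max (1 - εP - εQ) 0) ^ 2 / μ ^ 2 := by
  set M : Matrix (Fin m) (Fin m) ℂ := Aᴴ * B with hM
  have hMmem : M ∈ Matrix.unitaryGroup (Fin m) ℂ := by
    rw [hM, ← Matrix.star_eq_conjTranspose]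
    exact mul_mem (Unitary.star_mem hA) hB
  -- μ bounds
  have hμ2 : ∀ i j, ‖M i j‖ ≤ μ := fun i j => hμ.2 ⟨i, j, rfl⟩
  have hμ0 : 0 ≤ μ := by
    obtain ⟨i0, j0, h0⟩ := hμ.1
    rw [h0]; exact norm_nonneg _
  -- p = M q
  have hpMq : p = M.mulVec q := by
    have h1 : Aᴴ.mulVec (A.mulVec p) = Aᴴ.mulVec (B.mulVec q) := by rw [hpq]
    rw [Matrix.mulVec_mulVec, Matrix.mulVec_mulVec] at h1
    have hAA : Aᴴ * A = 1 := by
      rw [← Matrix.star_eq_conjTranspose]; exact hA.1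
    rwa [hAA, Matrix.one_mulVec] at h1
  -- norms
  set np := vnorm2 p with hnp
  set nq := vnorm2 q with hnq
  have hnp0 : 0 < np := by
    rcases lt_or_eq_of_le (vnorm2_nonneg p) with h | h
    · exact h
    · exact absurd (vnorm2_eq_zero h.symm) hp0
  have hnpq : np = nq := by
    have h1 := unitary_mulVec_norm hA p
    have h2 := unitary_mulVec_norm hB q
    rw [hpq] at h1
    rw [hnp, hnq, ← h1, ← h2]
  -- decomposition
  set u : Fin m → ℂ := (Dmat P).mulVec p with hu
  set v : Fin m → ℂ := (Dmat Q).mulVec q with hv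
  set rP : Fin m → ℂ := p - u with hrP
  set rQ : Fin m → ℂ := q - v with hrQ
  have hpdec : p = rP + u := by rw [hrP]; ring
  have hqdec : q = rQ + v := by rw [hrQ]; ring
  have hdec : dotProduct (star p) p
      = dotProduct (star rP) (M.mulVec q)
        + dotProduct (star u) (M.mulVec rQ)
        + dotProduct (star u) (M.mulVec v) := by
    have e1 : dotProduct (star p) (M.mulVec q)
        = dotProduct (star rP) (M.mulVec q) + dotProduct (star u) (M.mulVec q) := by
      conv_lhs => rw [hpdec]
      rw [star_add, add_dotProduct]
    have e2 : dotProduct (star u) (M.mulVec q)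
        = dotProduct (star u) (M.mulVec rQ) + dotProduct (star u) (M.mulVec v) := by
      conv_lhs => rw [hqdec]
      rw [Matrix.mulVec_add, dotProduct_add]
    rw [show dotProduct (star p) p = dotProduct (star p) (M.mulVec q) by rw [← hpMq],
      e1, e2, add_assoc]
  -- three bounds
  have b1 : ‖dotProduct (star rP) (M.mulVec q)‖ ≤ εP * np * nq := by
    refine (abs_dot_le _ _).trans ?_
    rw [unitary_mulVec_norm hMmem q, ← hnq]
    exact mul_le_mul_of_nonneg_right hpc (vnorm2_nonneg q)
  have b2 : ‖dotProduct (star u) (M.mulVec rQ)‖ ≤ np * (εQ * nq) := by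
    refine (abs_dot_le _ _).trans ?_
    rw [unitary_mulVec_norm hMmem rQ]
    exact mul_le_mul (vnorm2_Dmat_le P p) hqc (vnorm2_nonneg _) hnp0.le
  have b3 : ‖dotProduct (star u) (M.mulVec v)‖
      ≤ μ * ((Real.sqrt P.card * np) * (Real.sqrt Q.card * nq)) := by
    have hstep : ‖dotProduct (star u) (M.mulVec v)‖
        ≤ ∑ i, ‖u i‖ * (μ * ∑ j, ‖v j‖) := by
      refine (norm_sum_le _ _).trans ?_
      refine Finset.sum_le_sum fun i _ => ?_
      rw [Pi.star_apply, norm_mul, Complex.star_def, Complex.norm_conj]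
      refine mul_le_mul_of_nonneg_left ?_ (norm_nonneg _)
      refine (norm_sum_le (E := ℂ) Finset.univ (fun j => M i j * v j)).trans ?_
      rw [Finset.mul_sum]
      refine Finset.sum_le_sum fun j _ => ?_
      rw [norm_mul]
      exact mul_le_mul_of_nonneg_right (hμ2 i j) (norm_nonneg _)
    refine hstep.trans ?_
    rw [← Finset.sum_mul]
    have hP : ∑ i, ‖u i‖ ≤ Real.sqrt P.card * np := by
      rw [hu, sum_abs_Dmat]; exact l1_le_sqrt_card P p
    have hQ : ∑ j, ‖v j‖ ≤ Real.sqrt Q.card * nq := by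
      rw [hv, sum_abs_Dmat]; exact l1_le_sqrt_card Q q
    have hPn : 0 ≤ ∑ i, ‖u i‖ := Finset.sum_nonneg fun _ _ => norm_nonneg _
    have hQn : 0 ≤ ∑ j, ‖v j‖ := Finset.sum_nonneg fun _ _ => norm_nonneg _
    calc (∑ i, ‖u i‖) * (μ * ∑ j, ‖v j‖)
        = μ * ((∑ i, ‖u i‖) * (∑ j, ‖v j‖)) := by ring
      _ ≤ μ * ((Real.sqrt P.card * np) * (Real.sqrt Q.card * nq)) := by
          refine mul_le_mul_of_nonneg_left ?_ hμ0
          exact mul_le_mul hP hQ hQn (mul_nonneg (Real.sqrt_nonneg _) hnp0.le)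
  -- combine
  have habs : np ^ 2 ≤ ‖dotProduct (star rP) (M.mulVec q)‖
      + ‖dotProduct (star u) (M.mulVec rQ)‖
      + ‖dotProduct (star u) (M.mulVec v)‖ := by
    have h1 : ‖dotProduct (star p) p‖ = np ^ 2 := by
      rw [dot_self, Complex.norm_real, Real.norm_eq_abs, abs_of_nonneg (sq_nonneg _)]
    calc np ^ 2 = ‖dotProduct (star p) p‖ := h1.symm
      _ ≤ _ := by
          rw [hdec]
          exact (norm_add_le _ _).trans
            (add_le_add_left (norm_add_le _ _) _)
  have key : np ^ 2 ≤ εP * np * nq + np * (εQ * nq)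
      + μ * ((Real.sqrt P.card * np) * (Real.sqrt Q.card * nq)) := by
    refine habs.trans ?_
    gcongr
  -- divide by np^2
  have key2 : 1 ≤ εP + εQ + μ * (Real.sqrt P.card * Real.sqrt Q.card) := by
    rw [← hnpq] at key
    have hnp2 : 0 < np ^ 2 := by positivity
    nlinarith [key]
  rcases le_or_gt (1 - εP - εQ) 0 with hc | hc
  · rw [max_eq_right hc]
    have : ((0:ℝ)) ^ 2 / μ ^ 2 = 0 := by simp
    rw [this]
    exact mul_nonneg (Nat.cast_nonneg _) (Nat.cast_nonneg _)
  · rw [max_eq_left hc.le]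
    have hμpos : 0 < μ := by
      rcases lt_or_eq_of_le hμ0 with h | h
      · exact h
      · exfalso
        rw [← h, zero_mul, add_zero] at key2
        linarith
    rw [ge_iff_le, div_le_iff₀ (by positivity)]
    have hsP : Real.sqrt (P.card:ℝ) ^ 2 = P.card := Real.sq_sqrt (Nat.cast_nonneg _)
    have hsQ : Real.sqrt (Q.card:ℝ) ^ 2 = Q.card := Real.sq_sqrt (Nat.cast_nonneg _)
    have h5 : 1 - εP - εQ ≤ μ * (Real.sqrt P.card * Real.sqrt Q.card) := by linarith
    have h6 := mul_le_mul h5 h5 hc.le (mul_nonneg hμ0 (mul_nonneg (Real.sqrt_nonneg _) (Real.sqrt_nonneg _)) : (0:ℝ) ≤ μ * (Real.sqrt P.card * Real.sqrt Q.card))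
    have h7 : (μ * (Real.sqrt P.card * Real.sqrt Q.card)) * (μ * (Real.sqrt P.card * Real.sqrt Q.card))
        = (P.card : ℝ) * Q.card * μ ^ 2 := by
      linear_combination (μ ^ 2 * Real.sqrt (Q.card:ℝ) ^ 2) * hsP + (μ ^ 2 * (P.card : ℝ)) * hsQ
    nlinarith [h6, h7]
end

section
/- Let U ∈ ℂ^{m×m} be unitary, Q ⊆ {1,…,m}, P ⊆ {1,…,m}, and write Δ = ‖D_P U D_Q U*‖_{2→2}. Suppose Δ < 1, p ∈ range(U D_Q U*), n ∈ ℂ^m, and y = D_{P^c} p + n, where P^c is the complement of P. Then with L = (I − D_P U D_Q U*)^{-1} D_{P^c}, one has ‖L y − p‖₂ ≤ ‖D_{P^c} n‖₂ / (1 − Δ). -/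
open scoped BigOperators Matrix

/- Helper lemmas -/

lemma vnorm2_eq_norm {m : ℕ} (x : Fin m → ℂ) :
    vnorm2 x = ‖(WithLp.equiv 2 (Fin m → ℂ)).symm x‖ := by
  rw [EuclideanSpace.norm_eq, vnorm2]
  congr 1

lemma vnorm2_add_le {m : ℕ} (x y : Fin m → ℂ) :
    vnorm2 (x + y) ≤ vnorm2 x + vnorm2 y := by
  rw [vnorm2_eq_norm, vnorm2_eq_norm, vnorm2_eq_norm, WithLp.equiv_symm_apply, WithLp.toLp_add]
  exact norm_add_le _ _

lemma vnorm2_smul {m : ℕ} (a : ℂ) (x : Fin m → ℂ) :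
    vnorm2 (a • x) = ‖a‖ * vnorm2 x := by
  rw [vnorm2_eq_norm, vnorm2_eq_norm, WithLp.equiv_symm_apply, WithLp.toLp_smul, norm_smul]

lemma opnorm2_bddAbove {m n : ℕ} (A : Matrix (Fin m) (Fin n) ℂ) :
    BddAbove {c | ∃ x : Fin n → ℂ, vnorm2 x = 1 ∧ c = vnorm2 (A.mulVec x)} := by
  set f : EuclideanSpace ℂ (Fin n) →L[ℂ] EuclideanSpace ℂ (Fin m) :=
    LinearMap.toContinuousLinearMap (Matrix.toEuclideanLin A)
  refine ⟨‖f‖, fun c hc => ?_⟩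
  obtain ⟨x, hx1, rfl⟩ := hc
  have hval : vnorm2 (A.mulVec x) = ‖f ((WithLp.equiv 2 (Fin n → ℂ)).symm x)‖ := by
    rw [vnorm2_eq_norm]
    congr 1
  rw [hval]
  calc ‖f ((WithLp.equiv 2 (Fin n → ℂ)).symm x)‖
      ≤ ‖f‖ * ‖(WithLp.equiv 2 (Fin n → ℂ)).symm x‖ := f.le_opNorm _
    _ = ‖f‖ * 1 := by rw [← vnorm2_eq_norm, hx1]
    _ = ‖f‖ := mul_one _

lemma opnorm2_nonneg {m n : ℕ} (A : Matrix (Fin m) (Fin n) ℂ) : 0 ≤ opnorm2 A :=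
  Real.sSup_nonneg (by rintro c ⟨x, _, rfl⟩; exact vnorm2_nonneg _)

lemma vnorm2_mulVec_le {m n : ℕ} (A : Matrix (Fin m) (Fin n) ℂ) (x : Fin n → ℂ) :
    vnorm2 (A.mulVec x) ≤ opnorm2 A * vnorm2 x := by
  by_cases hx : x = 0
  · subst hx
    have h1 : vnorm2 (A.mulVec (0 : Fin n → ℂ)) = 0 := by
      simp [Matrix.mulVec_zero, vnorm2]
    have h0 : vnorm2 (0 : Fin n → ℂ) = 0 := by simp [vnorm2]
    rw [h1, h0, mul_zero]
  · have hc : 0 < vnorm2 x := by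
      rcases lt_or_eq_of_le (vnorm2_nonneg x) with h | h
      · exact h
      · exact absurd (vnorm2_eq_zero h.symm) hx
    set c := vnorm2 x with hcdef
    have hx' : vnorm2 (((c : ℂ)⁻¹) • x) = 1 := by
      rw [vnorm2_smul, norm_inv]
      rw [Complex.norm_real, Real.norm_eq_abs, abs_of_pos hc]
      field_simp
      exact hcdef.symm
    have hmem : vnorm2 (A.mulVec (((c : ℂ)⁻¹) • x)) ∈
        {c | ∃ x : Fin n → ℂ, vnorm2 x = 1 ∧ c = vnorm2 (A.mulVec x)} :=
      ⟨_, hx', rfl⟩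
    have hle := le_csSup (opnorm2_bddAbove A) hmem
    have hsm : A.mulVec (((c : ℂ)⁻¹) • x) = ((c : ℂ)⁻¹) • A.mulVec x := by
      rw [Matrix.mulVec_smul]
    rw [hsm, vnorm2_smul, norm_inv, Complex.norm_real, Real.norm_eq_abs, abs_of_pos hc] at hle
    rw [opnorm2] at *
    calc vnorm2 (A.mulVec x) = c * (c⁻¹ * vnorm2 (A.mulVec x)) := by
          field_simp
      _ ≤ c * sSup {c | ∃ x : Fin n → ℂ, vnorm2 x = 1 ∧ c = vnorm2 (A.mulVec x)} := by
          exact mul_le_mul_of_nonneg_left hle (le_of_lt hc)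
      _ = _ := mul_comm _ _

lemma Dmat_idem {m : ℕ} (P : Finset (Fin m)) : Dmat P * Dmat P = Dmat P := by
  rw [Dmat, Matrix.diagonal_mul_diagonal]
  refine congrArg Matrix.diagonal ?_
  funext i
  by_cases h : i ∈ P <;> simp [h]

lemma Dmat_compl {m : ℕ} (P : Finset (Fin m)) : Dmat Pᶜ = 1 - Dmat P := by
  ext i j
  rcases eq_or_ne i j with hij | hij
  · subst hij
    by_cases h : i ∈ P <;>
      simp [Dmat, Matrix.diagonal_apply, Matrix.one_apply, Matrix.sub_apply, h,
        Finset.mem_compl]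
  · simp [Dmat, Matrix.diagonal_apply, Matrix.one_apply, Matrix.sub_apply, hij,
      Finset.mem_compl]

theorem stmt10 {m : ℕ} (U : Matrix (Fin m) (Fin m) ℂ)
    (hU : U ∈ Matrix.unitaryGroup (Fin m) ℂ) (P Q : Finset (Fin m))
    (hΔ : opnorm2 (Dmat P * (U * Dmat Q * Uᴴ)) < 1)
    (p : Fin m → ℂ) (hp : ∃ z, p = (U * Dmat Q * Uᴴ).mulVec z)
    (nv : Fin m → ℂ) (y : Fin m → ℂ) (hy : y = (Dmat Pᶜ).mulVec p + nv) :
    vnorm2 (((1 - Dmat P * (U * Dmat Q * Uᴴ))⁻¹ * Dmat Pᶜ).mulVec y - p)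
      ≤ vnorm2 ((Dmat Pᶜ).mulVec nv) / (1 - opnorm2 (Dmat P * (U * Dmat Q * Uᴴ))) := by
  set B : Matrix (Fin m) (Fin m) ℂ := U * Dmat Q * Uᴴ with hBdef
  set M : Matrix (Fin m) (Fin m) ℂ := Dmat P * B with hMdef
  set N : Matrix (Fin m) (Fin m) ℂ := 1 - M with hNdef
  set Δ : ℝ := opnorm2 M with hΔdef
  have hΔ0 : 0 ≤ Δ := opnorm2_nonneg M
  have hΔ1 : 0 < 1 - Δ := by linarith
  -- U is unitary
  have hUU : Uᴴ * U = 1 := hU.1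
  -- B is idempotent
  have hBB : B * B = B := by
    have h1 : B * B = U * (Dmat Q * ((Uᴴ * U) * (Dmat Q * Uᴴ))) := by
      simp only [hBdef, Matrix.mul_assoc]
    rw [h1, hUU, Matrix.one_mul, ← Matrix.mul_assoc (Dmat Q) (Dmat Q) Uᴴ, Dmat_idem,
      hBdef, Matrix.mul_assoc]
  -- B fixes p
  have hBp : B.mulVec p = p := by
    obtain ⟨z, hz⟩ := hp
    rw [hz, Matrix.mulVec_mulVec, hBB]
  -- (Dmat Pᶜ) p = N p
  have hDp : (Dmat Pᶜ).mulVec p = N.mulVec p := by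
    rw [Dmat_compl, hNdef, Matrix.sub_mulVec, Matrix.sub_mulVec, hMdef,
      ← Matrix.mulVec_mulVec, hBp]
  -- N is invertible
  have hdet : IsUnit N.det := by
    by_contra hd
    have hd0 : N.det = 0 := by
      rcases eq_or_ne N.det 0 with h | h
      · exact h
      · exact absurd (isUnit_iff_ne_zero.mpr h) hd
    obtain ⟨v, hv0, hv⟩ := Matrix.exists_mulVec_eq_zero_iff.mpr hd0
    have hveq : v = M.mulVec v := by
      have := hv
      rw [hNdef, Matrix.sub_mulVec, Matrix.one_mulVec, sub_eq_zero] at this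
      exact this
    have h1 : vnorm2 v ≤ Δ * vnorm2 v := by
      conv_lhs => rw [hveq]
      exact vnorm2_mulVec_le M v
    have hvpos : 0 < vnorm2 v := by
      rcases lt_or_eq_of_le (vnorm2_nonneg v) with h | h
      · exact h
      · exact absurd (vnorm2_eq_zero h.symm) hv0
    nlinarith
  have hNN : N⁻¹ * N = 1 := Matrix.nonsing_inv_mul N hdet
  have hNN' : N * N⁻¹ = 1 := Matrix.mul_nonsing_inv N hdet
  set w : Fin m → ℂ := (Dmat Pᶜ).mulVec nv with hwdef
  set u : Fin m → ℂ := N⁻¹.mulVec w with hudef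
  -- compute the residual vector
  have hres : (N⁻¹ * Dmat Pᶜ).mulVec y - p = u := by
    rw [hy, ← Matrix.mulVec_mulVec, Matrix.mulVec_add, Matrix.mulVec_mulVec,
      Dmat_idem, hDp, Matrix.mulVec_add, Matrix.mulVec_mulVec, hNN,
      Matrix.one_mulVec, ← hwdef]
    rw [hudef]
    abel
  -- N u = w
  have hNu : N.mulVec u = w := by
    rw [hudef, Matrix.mulVec_mulVec, hNN', Matrix.one_mulVec]
  have hu_eq : u = w + M.mulVec u := by
    have : u - M.mulVec u = w := by
      rw [← hNu, hNdef, Matrix.sub_mulVec, Matrix.one_mulVec]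
    rw [← this]; abel
  have hbound : vnorm2 u ≤ vnorm2 w + Δ * vnorm2 u := by
    calc vnorm2 u = vnorm2 (w + M.mulVec u) := by rw [← hu_eq]
      _ ≤ vnorm2 w + vnorm2 (M.mulVec u) := vnorm2_add_le _ _
      _ ≤ vnorm2 w + Δ * vnorm2 u := by
          have := vnorm2_mulVec_le M u
          linarith
  rw [hres, le_div_iff₀ hΔ1]
  nlinarith [vnorm2_nonneg u, vnorm2_nonneg w]
end
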